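/- Let G be a finite group and n a positive integer. The number of n-tuples (g₁, …, gₙ) ∈ Gⁿ that generate G (i.e., the subgroup generated by {g₁,…,gₙ} equals G) is divisible by the order of the commutator subgroup of G. -/

import Mathlib

open Subgroup MulAction Function
open scoped commutatorElement


private lemma card_preimage_hom {A B : Type*} [Group A] [Group B] (f : A →* B)
    (hf : Function.Surjective f) (s : Set B) :
    Nat.card (f ⁻¹' s) = Nat.card s * Nat.card f.ker := by
  have e : (f ⁻¹' s) ≃ s × f.ker := by
    refine
      { toFun := fun a => (⟨f a.1, a.2⟩, ⟨(surjInv hf (f a.1))⁻¹ * a.1, ?_⟩)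
        invFun := fun bk => ⟨surjInv hf bk.1.1 * bk.2.1, ?_⟩
        left_inv := ?_
        right_inv := ?_ }
    · simp [MonoidHom.mem_ker, surjInv_eq hf]
    · have hk : f bk.2.1 = 1 := bk.2.2
      simp only [Set.mem_preimage, map_mul, hk, mul_one, surjInv_eq hf]
      exact bk.1.2
    · rintro ⟨a, ha⟩
      simp [mul_assoc]
    · rintro ⟨⟨b, hb⟩, ⟨k, hk⟩⟩
      have hfk : f k = 1 := hk
      have h1 : f (surjInv hf b * k) = b := by
        simp [map_mul, hfk, surjInv_eq hf]
      ext
      · simp [h1]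
      · simp [h1, mul_assoc]
  rw [Nat.card_congr e, Nat.card_prod]



private lemma index_dvd_card_of_uniform_stab {M β : Type*} [Group M] [MulAction M β]
    (S : Subgroup M) (h : ∀ b : β, MulAction.stabilizer M b = S) :
    S.index ∣ Nat.card β := by
  classical
  have e := MulAction.selfEquivSigmaOrbitsQuotientStabilizer M β
  have e2 : (Σ ω : Quotient (MulAction.orbitRel M β), M ⧸ MulAction.stabilizer M ω.out) ≃
      (Quotient (MulAction.orbitRel M β)) × (M ⧸ S) :=
    (Equiv.sigmaCongrRight fun ω => Equiv.cast (by rw [h])).trans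
      (Equiv.sigmaEquivProd _ _)
  rw [Nat.card_congr (e.trans e2), Nat.card_prod]
  exact Dvd.intro_left _ rfl



private theorem aux_gen : ∀ (k : ℕ) (G : Type u) [Group G] [Finite G], Nat.card G ≤ k →
    ∀ (n : ℕ), 1 ≤ n →
    Nat.card (commutator G) ∣
      Nat.card {v : Fin n → G | Subgroup.closure (Set.range v) = ⊤} := by
  intro k
  induction k with
  | zero => intro G _ _ hk; exact absurd hk (by simpa using Nat.card_pos.ne')
  | succ k ih =>
    intro G _ _ hk n hn
    by_cases hZ : ∀ x : G, x ∈ Subgroup.center G ⊓ commutator G → x = 1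
    · -- Case 1
        classical
        set T : Set (Fin n → G) := {v | Subgroup.closure (Set.range v) = ⊤} with hT
        -- invariance of T under conjugation action
        have hsmul_mem : ∀ (g : ConjAct G) (v : Fin n → G), v ∈ T → g • v ∈ T := by
          intro g v hv
          have : Set.range (g • v) = (MulAut.conj (ConjAct.ofConjAct g)).toMonoidHom '' Set.range v := by
            rw [← Set.range_comp]
            rfl
          show Subgroup.closure (Set.range (g • v)) = ⊤
          rw [this, ← MonoidHom.map_closure, hv,
            Subgroup.map_top_of_surjective _ (MulEquiv.surjective _)]
        letI : MulAction (ConjAct G) T :=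
          { smul := fun g v => ⟨g • v.1, hsmul_mem g v.1 v.2⟩
            one_smul := fun v => Subtype.ext (one_smul _ _)
            mul_smul := fun g h v => Subtype.ext (mul_smul g h v.1) }
        have hsmul_def : ∀ (g : ConjAct G) (v : T), (g • v).1 = g • v.1 := fun _ _ => rfl
        -- stabilizer is uniform: comap of center
        set S : Subgroup (ConjAct G) :=
          (Subgroup.center G).comap (ConjAct.ofConjAct : ConjAct G ≃* G).toMonoidHom with hS
        have hstab : ∀ v : T, MulAction.stabilizer (ConjAct G) v = S := by
          intro v
          ext g
          simp only [MulAction.mem_stabilizer_iff, hS, Subgroup.mem_comap, MulEquiv.coe_toMonoidHom]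
          constructor
          · intro hgv
            rw [Subgroup.mem_center_iff]
            intro y
            have hmem : y ∈ Subgroup.closure (Set.range v.1) := by rw [v.2]; trivial
            have : Subgroup.closure (Set.range v.1) ≤
                Subgroup.centralizer {ConjAct.ofConjAct g} := by
              rw [Subgroup.closure_le]
              rintro x ⟨i, rfl⟩
              simp only [SetLike.mem_coe]
              rw [Subgroup.mem_centralizer_iff]
              rintro h₀ hh₀
              rw [Set.mem_singleton_iff] at hh₀
              rw [hh₀]
              have := congrFun (Subtype.ext_iff.mp hgv) i
              rw [hsmul_def] at this
              have h2 : ConjAct.ofConjAct g * v.1 i * (ConjAct.ofConjAct g)⁻¹ = v.1 i := this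
              rw [mul_inv_eq_iff_eq_mul] at h2
              exact h2
            have hy := this hmem
            rw [Subgroup.mem_centralizer_iff] at hy
            exact (hy (ConjAct.ofConjAct g) rfl).symm
          · intro hg
            apply Subtype.ext
            funext i
            rw [hsmul_def]
            show ConjAct.ofConjAct g * v.1 i * (ConjAct.ofConjAct g)⁻¹ = v.1 i
            rw [← Subgroup.mem_center_iff.mp hg (v.1 i), mul_assoc, mul_inv_cancel, mul_one]
        -- |commutator| divides index of center
        have hdvd1 : Nat.card (commutator G) ∣ (Subgroup.center G).index := by
          have hinj : Function.Injective
              ((QuotientGroup.mk' (Subgroup.center G)).comp (commutator G).subtype) := by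
            rw [← MonoidHom.ker_eq_bot_iff, eq_bot_iff]
            intro x hx
            have : (x : G) ∈ Subgroup.center G := by
              have := MonoidHom.mem_ker.mp hx
              simpa [QuotientGroup.eq_one_iff] using this
            have hx1 : (x : G) = 1 := hZ x ⟨this, x.2⟩
            exact Subgroup.mem_bot.mpr (Subtype.ext (by simp [hx1]))
          have := Subgroup.card_dvd_of_injective _ hinj
          rwa [Subgroup.index] 
        have hdvd2 : S.index ∣ Nat.card T := index_dvd_card_of_uniform_stab S hstab
        have hSindex : S.index = (Subgroup.center G).index :=
          Subgroup.index_comap_of_surjective _ (MulEquiv.surjective _)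
        rw [← hSindex] at hdvd1
        exact hdvd1.trans hdvd2

    · -- Case 2
        push_neg at hZ
        obtain ⟨z, hzc, hz1⟩ := hZ
        classical
        -- element of prime order
        set m := orderOf z with hm
        have hm1 : m ≠ 1 := fun h => hz1 (orderOf_eq_one_iff.mp h)
        have hm0 : m ≠ 0 := (orderOf_pos z).ne'
        set p := m.minFac with hp
        have hpp : p.Prime := Nat.minFac_prime hm1
        have hpdvd : p ∣ m := Nat.minFac_dvd m
        set zp := z ^ (m / p) with hzp
        have hordzp : orderOf zp = p := by
          rw [hzp, orderOf_pow, ← hm, Nat.gcd_eq_right (Nat.div_dvd_of_dvd hpdvd),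
            Nat.div_div_self hpdvd hm0]
        have hzpc : zp ∈ Subgroup.center G := (Subgroup.center G).pow_mem hzc.1 _
        have hzpcomm : zp ∈ commutator G := (commutator G).pow_mem hzc.2 _
        set C₀ : Subgroup G := Subgroup.zpowers zp with hC₀
        have hC₀le : C₀ ≤ Subgroup.center G := Subgroup.zpowers_le.mpr hzpc
        have hC₀comm : C₀ ≤ commutator G := Subgroup.zpowers_le.mpr hzpcomm
        haveI hC₀n : C₀.Normal := by
          constructor
          intro x hx g
          have hxc := Subgroup.mem_center_iff.mp (hC₀le hx) g
          rw [hxc, mul_assoc, mul_inv_cancel, mul_one]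
          exact hx
        have hcardC₀ : Nat.card C₀ = p := by rw [hC₀, Nat.card_zpowers, hordzp]
        set π : G →* G ⧸ C₀ := QuotientGroup.mk' C₀ with hπ
        have hπs : Function.Surjective π := QuotientGroup.mk'_surjective C₀
        -- the componentwise hom
        set Φ : (Fin n → G) →* (Fin n → G ⧸ C₀) :=
          { toFun := fun v i => π (v i)
            map_one' := by funext i; simp
            map_mul' := by intro v w; funext i; simp } with hΦ
        have hΦs : Function.Surjective Φ := by
          intro w
          refine ⟨fun i => surjInv hπs (w i), ?_⟩
          funext i
          exact surjInv_eq hπs (w i)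
        -- kernel of Φ
        have hkerΦ : Nat.card Φ.ker = p ^ n := by
          have e : Φ.ker ≃ (Fin n → C₀) := by
            refine
              { toFun := fun v i => ⟨v.1 i, ?_⟩
                invFun := fun c => ⟨fun i => (c i).1, ?_⟩
                left_inv := fun v => Subtype.ext rfl
                right_inv := fun c => rfl }
            · have := congrFun (MonoidHom.mem_ker.mp v.2) i
              exact (QuotientGroup.eq_one_iff _).mp this
            · rw [MonoidHom.mem_ker]
              funext i
              exact (QuotientGroup.eq_one_iff _).mpr (c i).2
          rw [Nat.card_congr e, Nat.card_fun, hcardC₀, Nat.card_eq_fintype_card, Fintype.card_fin]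
        -- decomposition g = k * c for subgroups mapping onto the quotient
        have key : ∀ v : Fin n → G,
            Subgroup.closure (Set.range (Φ v)) = ⊤ → Subgroup.closure (Set.range v) = ⊤ := by
          intro v hQ
          set K := Subgroup.closure (Set.range v) with hK
          have hmapK : K.map π = ⊤ := by
            rw [hK, MonoidHom.map_closure]
            have : π '' Set.range v = Set.range (Φ v) := (Set.range_comp π v).symm
            rw [this, hQ]
          have hdecomp : ∀ g : G, ∃ k ∈ K, ∃ c ∈ C₀, g = k * c := by
            intro g
            have : π g ∈ K.map π := by rw [hmapK]; trivial
            obtain ⟨x, hx, hπx⟩ := this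
            refine ⟨x, hx, x⁻¹ * g, ?_, by group⟩
            have : π (x⁻¹ * g) = 1 := by rw [map_mul, map_inv, hπx, inv_mul_cancel]
            exact (QuotientGroup.eq_one_iff _).mp this
          haveI hKn : K.Normal := by
            constructor
            intro x hx g
            obtain ⟨a, ha, c, hc, rfl⟩ := hdecomp g
            have hcx : c * x = x * c := (Subgroup.mem_center_iff.mp (hC₀le hc) x).symm
            have : a * c * x * (a * c)⁻¹ = a * x * a⁻¹ := by
              rw [mul_inv_rev, mul_assoc a c x, hcx]
              group
            rw [this]
            exact K.mul_mem (K.mul_mem ha hx) (K.inv_mem ha)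
          have hcommle : commutator G ≤ K := by
            rw [_root_.commutator_def, Subgroup.commutator_le]
            intro x _ y _
            obtain ⟨a, ha, c, hc, rfl⟩ := hdecomp x
            obtain ⟨b, hb, d, hd, rfl⟩ := hdecomp y
            apply (QuotientGroup.eq_one_iff (N := K) _).mp
            have hmk : ∀ w : G, w ∈ K → ((w : G) : G ⧸ K) = 1 := fun w hw =>
              (QuotientGroup.eq_one_iff (N := K) w).mpr hw
            have expand : ((⁅a * c, b * d⁆ : G) : G ⧸ K) =
                ⁅((a * c : G) : G ⧸ K), ((b * d : G) : G ⧸ K)⁆ := by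
              rfl
            rw [expand]
            have h1 : ((a * c : G) : G ⧸ K) = ((c : G) : G ⧸ K) := by
              rw [QuotientGroup.mk_mul, hmk a ha, one_mul]
            have h2 : ((b * d : G) : G ⧸ K) = ((d : G) : G ⧸ K) := by
              rw [QuotientGroup.mk_mul, hmk b hb, one_mul]
            rw [h1, h2]
            apply commutatorElement_eq_one_iff_commute.mpr
            have : c * d = d * c := (Subgroup.mem_center_iff.mp (hC₀le hc) d).symm
            show ((c : G) : G ⧸ K) * ((d : G) : G ⧸ K) = ((d : G) : G ⧸ K) * ((c : G) : G ⧸ K)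
            rw [← QuotientGroup.mk_mul, ← QuotientGroup.mk_mul, this]
          have hC₀K : C₀ ≤ K := hC₀comm.trans hcommle
          rw [eq_top_iff]
          intro g _
          obtain ⟨a, ha, c, hc, rfl⟩ := hdecomp g
          exact K.mul_mem ha (hC₀K hc)
        -- the generating set of G is the preimage of the generating set of the quotient
        have hsets : {v : Fin n → G | Subgroup.closure (Set.range v) = ⊤} =
            Φ ⁻¹' {w : Fin n → G ⧸ C₀ | Subgroup.closure (Set.range w) = ⊤} := by
          ext v
          constructor
          · intro hv
            show Subgroup.closure (Set.range (Φ v)) = ⊤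
            rw [show Set.range (Φ v) = π '' Set.range v from Set.range_comp π v,
              ← MonoidHom.map_closure, hv, Subgroup.map_top_of_surjective _ hπs]
          · intro hv
            exact key v hv
        -- commutator subgroup as preimage
        have hmapcomm : Subgroup.map π (commutator G) = commutator (G ⧸ C₀) := by
          rw [_root_.commutator_def, _root_.commutator_def, Subgroup.map_commutator,
            Subgroup.map_top_of_surjective _ hπs]
        have hcommset : (commutator G : Set G) = π ⁻¹' (commutator (G ⧸ C₀) : Set (G ⧸ C₀)) := by
          have : Subgroup.comap π (commutator (G ⧸ C₀)) = commutator G := by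
            rw [← hmapcomm, Subgroup.comap_map_eq, QuotientGroup.ker_mk',
              sup_eq_left.mpr hC₀comm]
          rw [← this, Subgroup.coe_comap]
        -- count
        have hcard1 : Nat.card (commutator G) = Nat.card (commutator (G ⧸ C₀)) * p := by
          have := card_preimage_hom π hπs (commutator (G ⧸ C₀) : Set (G ⧸ C₀))
          have hkerπ : Nat.card π.ker = p := by
            have : π.ker = C₀ := QuotientGroup.ker_mk' C₀
            rw [this, hcardC₀]
          rw [hkerπ] at this
          calc Nat.card (commutator G)
              = Nat.card (π ⁻¹' (commutator (G ⧸ C₀) : Set (G ⧸ C₀))) := by rw [← hcommset]; rfl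
            _ = Nat.card (commutator (G ⧸ C₀)) * p := this
        have hcard2 : Nat.card {v : Fin n → G | Subgroup.closure (Set.range v) = ⊤} =
            Nat.card {w : Fin n → G ⧸ C₀ | Subgroup.closure (Set.range w) = ⊤} * p ^ n := by
          rw [hsets, card_preimage_hom Φ hΦs, hkerΦ]
        -- apply induction hypothesis
        have hcardQ : Nat.card (G ⧸ C₀) ≤ k := by
          have h1 : Nat.card G = Nat.card (G ⧸ C₀) * Nat.card C₀ :=
            Subgroup.card_eq_card_quotient_mul_card_subgroup C₀
          have h2 : 1 ≤ Nat.card (G ⧸ C₀) := Nat.card_pos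
          have h3 : 2 ≤ p := hpp.two_le
          have : Nat.card (G ⧸ C₀) * 2 ≤ Nat.card (G ⧸ C₀) * p := by
            exact Nat.mul_le_mul_left _ h3
          rw [hcardC₀] at h1
          omega
        have hIH := ih (G ⧸ C₀) hcardQ n hn
        rw [hcard1, hcard2]
        exact mul_dvd_mul hIH (dvd_pow_self p (by omega))


theorem stmt_4 (G : Type*) [Group G] [Fintype G] (n : ℕ) (hn : 1 ≤ n) :
    Nat.card (commutator G) ∣
      Nat.card {v : Fin n → G | Subgroup.closure (Set.range v) = ⊤} := by
  exact aux_gen (Nat.card G) G le_rfl n hn
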